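/- Let F be a field and X, Y, Z pairwise disjoint finite variable types; work in R = MvPolynomial (X ⊕ Y ⊕ Z) F. Let P₀ be a finite set of polynomials in MvPolynomial.supported F (X ∪ Z) that is in z-normal form, and let P₁ be a finite set of polynomials in MvPolynomial.supported F (Y ∪ Z). Suppose there exist polynomials (a_p)_{p ∈ P₀} and (b_q)_{q ∈ P₁} in R, each computed by a width-w roABP in a variable order σ in which the X-variables precede all others, such that Σ_{p ∈ P₀} a_p · p + Σ_{q ∈ P₁} b_q · q = 1. Then there exists a span program over Boolean variables indexed by Z, with vectors in R, of size at most 2·w·|P₀|, that computes an interpolant for (P₀, P₁). -/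

import Mathlib

open MvPolynomial

section helpers
variable {F : Type} [Field F] {V : Type}

lemma list_prod_entry_mem {w : ℕ} (A : Subalgebra F (MvPolynomial V F))
    (L : List (Matrix (Fin w) (Fin w) (MvPolynomial V F)))
    (hL : ∀ M ∈ L, ∀ i j, M i j ∈ A) (i j : Fin w) : L.prod i j ∈ A := by
  induction L generalizing i j with
  | nil =>
      simp only [List.prod_nil]
      rw [Matrix.one_apply]
      split
      · exact A.one_mem
      · exact A.zero_mem
  | cons M L ih =>
      rw [List.prod_cons, Matrix.mul_apply]
      exact Subalgebra.sum_mem _ fun k _ =>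
        A.mul_mem (hL M List.mem_cons_self i k)
          (ih (fun N hN i j => hL N (List.mem_cons_of_mem _ hN) i j) k j)

lemma aeval_fix (g : V → MvPolynomial V F) (s : Set V) (hg : ∀ v ∈ s, g v = X v)
    (f : MvPolynomial V F) (hf : f ∈ supported F s) : aeval g f = f := by
  rw [supported_eq_adjoin_X] at hf
  induction hf using Algebra.adjoin_induction with
  | mem x hx =>
      obtain ⟨v, hv, rfl⟩ := hx
      simp [hg v hv]
  | algebraMap r => simp [MvPolynomial.algebraMap_eq]
  | add x y _ _ hx hy => rw [map_add, hx, hy]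
  | mul x y _ _ hx hy => rw [map_mul, hx, hy]

lemma aeval_const (g : V → MvPolynomial V F) (e : V → F) (s : Set V)
    (hg : ∀ v ∈ s, g v = C (e v))
    (f : MvPolynomial V F) (hf : f ∈ supported F s) : aeval g f = C (eval e f) := by
  rw [supported_eq_adjoin_X] at hf
  induction hf using Algebra.adjoin_induction with
  | mem x hx =>
      obtain ⟨v, hv, rfl⟩ := hx
      simp [hg v hv]
  | algebraMap r => simp [MvPolynomial.algebraMap_eq]
  | add x y _ _ hx hy => rw [map_add, hx, hy, map_add, map_add]
  | mul x y _ _ hx hy => rw [map_mul, hx, hy, map_mul, map_mul]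

end helpers


/-- A polynomial `f` is computed by a width-`w` roABP in variable order `σ`. -/
def ROABP {F : Type} [Field F] {V : Type} [Fintype V] {n : ℕ}
    (σ : Fin n ≃ V) (w : ℕ) (f : MvPolynomial V F) : Prop :=
  ∃ (hw : 0 < w) (M : Fin n → Matrix (Fin w) (Fin w) (MvPolynomial V F)),
    (∀ k i j, M k i j ∈ MvPolynomial.supported F ({σ k} : Set V)) ∧
    f = (List.ofFn M).prod ⟨0, hw⟩ ⟨0, hw⟩

/-- A row label of a span program: a positive literal, a negative literal, or the constant 1. -/
inductive SPLabel (Z : Type) where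
  | pos (i : Z)
  | neg (i : Z)
  | one

/-- Evaluation of a label under a Boolean assignment. -/
def SPLabel.evalb {Z : Type} (α : Z → Bool) : SPLabel Z → Bool
  | pos i => α i
  | neg i => !(α i)
  | one => true

/-- A span program over Boolean variables indexed by `Z` with vectors in `V₀`. -/
structure SpanProgram (F : Type) [Field F] (Z : Type) (V₀ : Type)
    [AddCommGroup V₀] [Module F V₀] where
  S : Type
  finS : Fintype S
  label : S → SPLabel Z
  vec : S → V₀
  target : V₀

/-- The size of a span program is the number of its rows. -/
def SpanProgram.size {F Z V₀ : Type} [Field F] [AddCommGroup V₀] [Module F V₀]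
    (P : SpanProgram F Z V₀) : ℕ := @Fintype.card P.S P.finS

/-- Acceptance: the target is in the span of vectors whose label evaluates to `true`. -/
def SpanProgram.accepts {F Z V₀ : Type} [Field F] [AddCommGroup V₀] [Module F V₀]
    (P : SpanProgram F Z V₀) (α : Z → Bool) : Prop :=
  P.target ∈ Submodule.span F (P.vec '' {s | (P.label s).evalb α = true})

/-- A span program is monotone if no row is labelled by a negated literal. -/
def SpanProgram.IsMonotone {F Z V₀ : Type} [Field F] [AddCommGroup V₀] [Module F V₀]
    (P : SpanProgram F Z V₀) : Prop := ∀ s i, P.label s ≠ SPLabel.neg i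

/-- Interpretation of a Boolean value in a field. -/
def boolToField (F : Type) [Field F] (b : Bool) : F := if b then 1 else 0

/-- Feasible interpolation for roABP-IPS_LIN: from a width-$w$
roABP-IPS_LIN refutation of $P_0 ∪ P_1$, in a variable order where the $X$-variables
come first and with $P_0$ in $z$-normal form, one can extract a span program of size
at most $2·w·|P_0|$ computing an interpolant for $(P_0, P_1)$. -/
theorem stmt_1 (F : Type) [Field F]
    (X Y Z : Type) [Fintype X] [Fintype Y] [Fintype Z]
    (P₀ P₁ : Finset (MvPolynomial (X ⊕ Y ⊕ Z) F))
    -- P₀ is supported on the X- and Z-variables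
    (hP₀supp : ∀ p ∈ P₀, p ∈ MvPolynomial.supported F
      (Set.range (Sum.inl : X → X ⊕ Y ⊕ Z) ∪
        Set.range ((Sum.inr ∘ Sum.inr) : Z → X ⊕ Y ⊕ Z)))
    -- P₀ is in z-normal form
    (hP₀nf : ∀ p ∈ P₀,
      p ∈ MvPolynomial.supported F (Set.range (Sum.inl : X → X ⊕ Y ⊕ Z)) ∨
      ∃ (j : Z) (p' p'' : MvPolynomial (X ⊕ Y ⊕ Z) F),
        p' ∈ MvPolynomial.supported F (Set.range (Sum.inl : X → X ⊕ Y ⊕ Z)) ∧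
        p'' ∈ MvPolynomial.supported F (Set.range (Sum.inl : X → X ⊕ Y ⊕ Z)) ∧
        p = p' + MvPolynomial.X (Sum.inr (Sum.inr j)) * p'')
    -- P₁ is supported on the Y- and Z-variables
    (hP₁supp : ∀ q ∈ P₁, q ∈ MvPolynomial.supported F
      (Set.range ((Sum.inr ∘ Sum.inl) : Y → X ⊕ Y ⊕ Z) ∪
        Set.range ((Sum.inr ∘ Sum.inr) : Z → X ⊕ Y ⊕ Z)))
    (w : ℕ) (σ : Fin (Fintype.card (X ⊕ Y ⊕ Z)) ≃ (X ⊕ Y ⊕ Z))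
    -- the X-variables precede all other variables in σ
    (hσ : ∀ k : Fin (Fintype.card (X ⊕ Y ⊕ Z)), (k : ℕ) < Fintype.card X ↔ ∃ x : X, σ k = Sum.inl x)
    (a b : MvPolynomial (X ⊕ Y ⊕ Z) F → MvPolynomial (X ⊕ Y ⊕ Z) F)
    (ha : ∀ p ∈ P₀, ROABP σ w (a p))
    (hb : ∀ q ∈ P₁, ROABP σ w (b q))
    (hrefut : (∑ p ∈ P₀, a p * p) + (∑ q ∈ P₁, b q * q) = 1) :
    ∃ SP : SpanProgram F Z (MvPolynomial (X ⊕ Y ⊕ Z) F),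
      SP.size ≤ 2 * w * P₀.card ∧
      -- SP computes an interpolant for (P₀, P₁):
      (∀ α : Z → Bool,
        (∃ x : X → Bool, ∀ p ∈ P₀,
          MvPolynomial.eval
            (Sum.elim (fun v => boolToField F (x v))
              (Sum.elim (fun _ : Y => (0 : F)) (fun i => boolToField F (α i)))) p = 0) →
        ¬ SP.accepts α) ∧
      (∀ α : Z → Bool,
        (∃ y : Y → Bool, ∀ q ∈ P₁,
          MvPolynomial.eval
            (Sum.elim (fun _ : X => (0 : F))
              (Sum.elim (fun v => boolToField F (y v)) (fun i => boolToField F (α i)))) q = 0) →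
        SP.accepts α) := by
  classical
  rcases eq_or_ne P₀ (∅ : Finset (MvPolynomial (X ⊕ Y ⊕ Z) F)) with hP₀e | hP₀ne
  · -- P₀ is empty
    subst hP₀e
    refine ⟨⟨Empty, inferInstance, fun s => s.elim, fun s => s.elim, 1⟩, ?_, ?_, ?_⟩
    · simp [SpanProgram.size]
    · intro α _ hacc
      have hempty : ({s : Empty | (SPLabel.evalb α (Empty.elim s)) = true} : Set Empty) = ∅ :=
        Set.eq_empty_of_isEmpty _
      rw [SpanProgram.accepts] at hacc
      simp only at hacc
      rw [hempty, Set.image_empty, Submodule.span_empty, Submodule.mem_bot] at hacc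
      exact one_ne_zero hacc
    · intro α ⟨y, hy⟩
      exfalso
      have h := congrArg (eval (Sum.elim (fun _ : X => (0 : F))
          (Sum.elim (fun v => boolToField F (y v)) (fun i => boolToField F (α i))))) hrefut
      rw [map_add, map_sum, map_sum, map_one, Finset.sum_empty, zero_add] at h
      rw [Finset.sum_congr rfl (fun q hq => by rw [map_mul, hy q hq, mul_zero])] at h
      simp at h
  · -- P₀ is nonempty
    obtain ⟨p₀, hp₀⟩ := Finset.nonempty_of_ne_empty hP₀ne
    obtain ⟨hw, -⟩ := ha p₀ hp₀
    set i0 : Fin w := ⟨0, hw⟩ with hi0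
    -- choose roABP matrices
    have hMex : ∀ p : {p // p ∈ P₀}, ∃ M : Fin (Fintype.card (X ⊕ Y ⊕ Z)) → Matrix (Fin w) (Fin w) (MvPolynomial (X ⊕ Y ⊕ Z) F),
        (∀ k i j, M k i j ∈ MvPolynomial.supported F ({σ k} : Set (X ⊕ Y ⊕ Z))) ∧
        a p.1 = (List.ofFn M).prod i0 i0 := by
      intro p
      obtain ⟨hw', M, hM, hprod⟩ := ha p.1 p.2
      exact ⟨M, hM, hprod⟩
    choose M hMsupp hMprod using hMex
    -- choose a z-normal form decomposition
    have hnf : ∀ p : {p // p ∈ P₀}, ∃ (jopt : Option Z) (p' p'' : (MvPolynomial (X ⊕ Y ⊕ Z) F)),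
        p' ∈ MvPolynomial.supported F (Set.range (Sum.inl : X → X ⊕ Y ⊕ Z)) ∧
        p'' ∈ MvPolynomial.supported F (Set.range (Sum.inl : X → X ⊕ Y ⊕ Z)) ∧
        (p : (MvPolynomial (X ⊕ Y ⊕ Z) F)) = p' + (jopt.elim 0 fun j => MvPolynomial.X (Sum.inr (Sum.inr j))) * p'' := by
      intro p
      rcases hP₀nf p.1 p.2 with h | ⟨j, p', p'', h1, h2, h3⟩
      · exact ⟨none, p.1, 0, h, Subalgebra.zero_mem _, by simp⟩
      · exact ⟨some j, p', p'', h1, h2, h3⟩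
    choose jo pA pB hpA hpB hpEq using hnf
    -- the X-part and YZ-part of each roABP
    set Amat : {p // p ∈ P₀} → Fin w → (MvPolynomial (X ⊕ Y ⊕ Z) F) :=
      fun p i => ((List.ofFn (M p)).take (Fintype.card X)).prod i0 i with hAmat
    set Bmat : {p // p ∈ P₀} → Fin w → (MvPolynomial (X ⊕ Y ⊕ Z) F) :=
      fun p i => ((List.ofFn (M p)).drop (Fintype.card X)).prod i i0 with hBmat
    have hAmem : ∀ p i, Amat p i ∈
        MvPolynomial.supported F (Set.range (Sum.inl : X → X ⊕ Y ⊕ Z)) := by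
      intro p i
      apply list_prod_entry_mem
      intro N hN i' j'
      rw [List.mem_iff_getElem] at hN
      obtain ⟨k, hk, hEq⟩ := hN
      have hkm : k < (Fintype.card X) := by
        have := hk
        rw [List.length_take, List.length_ofFn] at this
        omega
      have hkn : k < (Fintype.card (X ⊕ Y ⊕ Z)) := by
        have := hk
        rw [List.length_take, List.length_ofFn] at this
        omega
      rw [List.getElem_take, List.getElem_ofFn] at hEq
      subst hEq
      obtain ⟨x, hx⟩ := (hσ ⟨k, hkn⟩).mp hkm
      refine MvPolynomial.supported_mono ?_ (hMsupp p ⟨k, hkn⟩ i' j')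
      rw [Set.singleton_subset_iff, hx]
      exact Set.mem_range_self x
    have hBmem : ∀ p i, Bmat p i ∈
        MvPolynomial.supported F (Set.range (Sum.inr : Y ⊕ Z → X ⊕ Y ⊕ Z)) := by
      intro p i
      apply list_prod_entry_mem
      intro N hN i' j'
      rw [List.mem_iff_getElem] at hN
      obtain ⟨k, hk, hEq⟩ := hN
      have hkn : (Fintype.card X) + k < (Fintype.card (X ⊕ Y ⊕ Z)) := by
        have := hk
        rw [List.length_drop, List.length_ofFn] at this
        omega
      rw [List.getElem_drop, List.getElem_ofFn] at hEq
      subst hEq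
      have hnotlt : ¬ (((Fintype.card X) + k : ℕ) < (Fintype.card X)) := by omega
      refine MvPolynomial.supported_mono ?_ (hMsupp p ⟨(Fintype.card X) + k, hkn⟩ i' j')
      rw [Set.singleton_subset_iff]
      rcases hcase : σ ⟨(Fintype.card X) + k, hkn⟩ with x | u
      · exact absurd ((hσ ⟨(Fintype.card X) + k, hkn⟩).mpr ⟨x, hcase⟩) hnotlt
      · exact ⟨u, rfl⟩
    have haEq : ∀ p : {p // p ∈ P₀}, a p.1 = ∑ i : Fin w, Amat p i * Bmat p i := by
      intro p
      rw [hMprod p]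
      conv_lhs => rw [← List.take_append_drop (Fintype.card X) (List.ofFn (M p))]
      rw [List.prod_append, Matrix.mul_apply]
    -- the span program
    set lab : {p // p ∈ P₀} × Fin w × Bool → SPLabel Z := fun s =>
      match jo s.1, s.2.2 with
      | none, _ => SPLabel.one
      | some j, false => SPLabel.neg j
      | some j, true => SPLabel.pos j
      with hlab
    set vecf : {p // p ∈ P₀} × Fin w × Bool → (MvPolynomial (X ⊕ Y ⊕ Z) F) := fun s =>
      Amat s.1 s.2.1 *
        (match jo s.1, s.2.2 with
         | some _, true => pA s.1 + pB s.1
         | _, _ => pA s.1)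
      with hvecf
    refine ⟨⟨{p // p ∈ P₀} × Fin w × Bool, inferInstance, lab, vecf, 1⟩, ?_, ?_, ?_⟩
    · -- size bound
      apply le_of_eq
      simp only [SpanProgram.size, Fintype.card_prod, Fintype.card_coe, Fintype.card_bool,
        Fintype.card_fin]
      ring
    · -- soundness
      intro α ⟨x, hx⟩ hacc
      set e : X ⊕ Y ⊕ Z → F := Sum.elim (fun v => boolToField F (x v))
          (Sum.elim (fun _ : Y => (0 : F)) (fun i => boolToField F (α i))) with he
      have hvanish : ∀ u ∈ Submodule.span F (vecf '' {s | (lab s).evalb α = true}),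
          eval e u = 0 := by
        intro u hu
        induction hu using Submodule.span_induction with
        | mem v hv =>
            obtain ⟨⟨p, i, bb⟩, hs, rfl⟩ := hv
            have hp0 : eval e (p : (MvPolynomial (X ⊕ Y ⊕ Z) F)) = 0 := hx p.1 p.2
            have hdec := hpEq p
            rcases hj : jo p with _ | j
            · rw [hj] at hdec
              simp only [Option.elim, zero_mul, add_zero] at hdec
              have hv : vecf (p, i, bb) = Amat p i * pA p := by
                rcases bb <;> simp [hvecf, hj]
              rw [hv, map_mul, ← hdec, hp0, mul_zero]
            · rw [hj] at hdec
              simp only [Option.elim] at hdec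
              have hpe : eval e (pA p) + boolToField F (α j) * eval e (pB p) = 0 := by
                rw [← hp0, hdec]; simp [he]
              have hsval : (lab (p, i, bb)).evalb α = true := hs
              rcases bb with _ | _
              · -- negative literal active : α j = false
                have hαj : α j = false := by
                  simp only [hlab, hj] at hsval
                  simpa [SPLabel.evalb] using hsval
                have hpa : eval e (pA p) = 0 := by
                  rw [hαj] at hpe; simpa [boolToField] using hpe
                have hv : vecf (p, i, false) = Amat p i * pA p := by simp [hvecf, hj]
                rw [hv, map_mul, hpa, mul_zero]
              · -- positive literal active : α j = true
                have hαj : α j = true := by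
                  simp only [hlab, hj] at hsval
                  simpa [SPLabel.evalb] using hsval
                have hpa : eval e (pA p) + eval e (pB p) = 0 := by
                  rw [hαj] at hpe; simpa [boolToField] using hpe
                have hv : vecf (p, i, true) = Amat p i * (pA p + pB p) := by
                  simp [hvecf, hj]
                rw [hv, map_mul, map_add, hpa, mul_zero]
        | zero => exact map_zero _
        | add u v _ _ hu hv => rw [map_add, hu, hv, add_zero]
        | smul c u _ hu => rw [smul_eq_C_mul, map_mul, eval_C, hu, mul_zero]
      have h1 : eval e (1 : (MvPolynomial (X ⊕ Y ⊕ Z) F)) = 0 := hvanish 1 hacc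
      rw [map_one] at h1
      exact one_ne_zero h1
    · -- completeness
      intro α ⟨y, hy⟩
      set e' : X ⊕ Y ⊕ Z → F := Sum.elim (fun _ : X => (0 : F))
          (Sum.elim (fun v => boolToField F (y v)) (fun i => boolToField F (α i))) with he'
      set g : X ⊕ Y ⊕ Z → (MvPolynomial (X ⊕ Y ⊕ Z) F) := Sum.elim (fun x => MvPolynomial.X (Sum.inl x))
          (fun u => MvPolynomial.C (e' (Sum.inr u))) with hg
      have hfix : ∀ f ∈ MvPolynomial.supported F (Set.range (Sum.inl : X → X ⊕ Y ⊕ Z)),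
          aeval g f = f := by
        intro f hf
        exact aeval_fix g _ (by rintro v ⟨x, rfl⟩; simp [hg]) f hf
      have hconst : ∀ f ∈ MvPolynomial.supported F (Set.range (Sum.inr : Y ⊕ Z → X ⊕ Y ⊕ Z)),
          aeval g f = MvPolynomial.C (eval e' f) := by
        intro f hf
        exact aeval_const g e' _ (by rintro v ⟨u, rfl⟩; simp [hg]) f hf
      -- applying the substitution to the refutation
      have h1 := congrArg (aeval g) hrefut
      rw [map_add, map_sum, map_sum, map_one] at h1
      have hq0 : ∀ q ∈ P₁, (aeval g) (b q * q) = 0 := by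
        intro q hq
        have hsub : (Set.range ((Sum.inr ∘ Sum.inl) : Y → X ⊕ Y ⊕ Z) ∪
            Set.range ((Sum.inr ∘ Sum.inr) : Z → X ⊕ Y ⊕ Z)) ⊆
            Set.range (Sum.inr : Y ⊕ Z → X ⊕ Y ⊕ Z) := by
          rintro v (⟨u, rfl⟩ | ⟨u, rfl⟩) <;> exact ⟨_, rfl⟩
        rw [map_mul, hconst q (MvPolynomial.supported_mono hsub (hP₁supp q hq)),
          hy q hq, map_zero, mul_zero]
      rw [Finset.sum_eq_zero hq0, add_zero] at h1
      rw [← Finset.sum_attach P₀ (fun p => aeval g (a p * p))] at h1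
      -- the substituted polynomial
      have hφ : ∀ p : {p // p ∈ P₀}, aeval g (p : (MvPolynomial (X ⊕ Y ⊕ Z) F)) =
          pA p + ((jo p).elim 0 fun j => MvPolynomial.C (boolToField F (α j))) * pB p := by
        intro p
        conv_lhs => rw [hpEq p]
        rw [map_add, map_mul, hfix _ (hpA p), hfix _ (hpB p)]
        rcases hj : jo p with _ | j
        · simp
        · simp only [Option.elim]
          rw [aeval_X]
          simp [hg, he']
      show (1 : (MvPolynomial (X ⊕ Y ⊕ Z) F)) ∈ Submodule.span F (vecf '' {s | (lab s).evalb α = true})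
      rw [← h1]
      apply Submodule.sum_mem
      intro p _
      rw [map_mul, haEq p, map_sum]
      rw [Finset.sum_congr rfl (fun i _ => by
        rw [map_mul, hfix _ (hAmem p i), hconst _ (hBmem p i)])]
      rw [Finset.sum_mul]
      apply Submodule.sum_mem
      intro i _
      rw [hφ p]
      rcases hj : jo p with _ | j
      · have hv : vecf (p, i, false) = Amat p i * pA p := by simp [hvecf, hj]
        have heq : Amat p i * MvPolynomial.C (eval e' (Bmat p i)) *
            (pA p + (Option.elim (none : Option Z) 0
              fun j => MvPolynomial.C (boolToField F (α j))) * pB p)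
            = (eval e' (Bmat p i)) • vecf (p, i, false) := by
          rw [hv, smul_eq_C_mul]
          simp only [Option.elim, zero_mul, add_zero]
          ring
        rw [heq]
        exact Submodule.smul_mem _ _ (Submodule.subset_span
          ⟨(p, i, false), by simp [hlab, hj, SPLabel.evalb], rfl⟩)
      · rcases hα : α j with _ | _
        · have hv : vecf (p, i, false) = Amat p i * pA p := by simp [hvecf, hj]
          have heq : Amat p i * MvPolynomial.C (eval e' (Bmat p i)) *
              (pA p + (Option.elim (some j) 0
                fun j => MvPolynomial.C (boolToField F (α j))) * pB p)
              = (eval e' (Bmat p i)) • vecf (p, i, false) := by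
            rw [hv, smul_eq_C_mul]
            simp only [Option.elim, hα, boolToField, if_neg (by simp : ¬ (false = true))]
            rw [map_zero]
            ring
          rw [heq]
          exact Submodule.smul_mem _ _ (Submodule.subset_span
            ⟨(p, i, false), by simp [hlab, hj, SPLabel.evalb, hα], rfl⟩)
        · have hv : vecf (p, i, true) = Amat p i * (pA p + pB p) := by simp [hvecf, hj]
          have heq : Amat p i * MvPolynomial.C (eval e' (Bmat p i)) *
              (pA p + (Option.elim (some j) 0
                fun j => MvPolynomial.C (boolToField F (α j))) * pB p)
              = (eval e' (Bmat p i)) • vecf (p, i, true) := by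
            rw [hv, smul_eq_C_mul]
            simp only [Option.elim, hα]
            rw [show boolToField F true = (1 : F) from rfl, map_one]
            ring
          rw [heq]
          exact Submodule.smul_mem _ _ (Submodule.subset_span
            ⟨(p, i, true), by simp [hlab, hj, SPLabel.evalb, hα], rfl⟩)
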